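/- For every g ≥ 1, the group Sp_{2g}(ℤ) is generated by the matrix J = [[0, I_g], [−I_g, 0]] together with the g(g+1)/2 matrices M_{i,j} = [[I_g, m_{i,j}], [0, I_g]] for 1 ≤ i ≤ j ≤ g, where m_{i,j} is the g×g integer matrix all of whose entries are 0 except those at positions (i,j) and (j,i), which are equal to 1. -/

import Mathlib

open Matrix

/-- The standard symplectic form matrix `J = [[0, I_g], [-I_g, 0]]` in `g × g` blocks. -/
def Jmat (g : ℕ) : Matrix (Fin g ⊕ Fin g) (Fin g ⊕ Fin g) ℤ :=
  Matrix.fromBlocks 0 1 (-1) 0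

/-- The symplectic group `Sp_{2g}(ℤ)`: integer matrices satisfying `ᵗγ ⬝ J ⬝ γ = J`,
as a subgroup of the general linear group. -/
def Sp (g : ℕ) : Subgroup (Matrix.GeneralLinearGroup (Fin g ⊕ Fin g) ℤ) where
  carrier := {γ | ((γ : Matrix (Fin g ⊕ Fin g) (Fin g ⊕ Fin g) ℤ))ᵀ * Jmat g *
      ((γ : Matrix (Fin g ⊕ Fin g) (Fin g ⊕ Fin g) ℤ)) = Jmat g}
  one_mem' := by simp
  mul_mem' := by
    intro a b ha hb
    simp only [Set.mem_setOf_eq, Units.val_mul, Matrix.transpose_mul] at *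
    calc (↑b)ᵀ * (↑a)ᵀ * Jmat g * ((a : Matrix (Fin g ⊕ Fin g) (Fin g ⊕ Fin g) ℤ) * ↑b)
        = (↑b)ᵀ * ((↑a)ᵀ * Jmat g * ↑a) * ↑b := by
          simp only [Matrix.mul_assoc]
      _ = Jmat g := by rw [ha, hb]
  inv_mem' := by
    intro a ha
    simp only [Set.mem_setOf_eq] at *
    have h1 : (a : Matrix (Fin g ⊕ Fin g) (Fin g ⊕ Fin g) ℤ) *
        (↑(a⁻¹) : Matrix (Fin g ⊕ Fin g) (Fin g ⊕ Fin g) ℤ) = 1 := by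
      rw [← Units.val_mul, mul_inv_cancel, Units.val_one]
    calc (↑(a⁻¹) : Matrix (Fin g ⊕ Fin g) (Fin g ⊕ Fin g) ℤ)ᵀ * Jmat g *
          (↑(a⁻¹) : Matrix (Fin g ⊕ Fin g) (Fin g ⊕ Fin g) ℤ)
        = (↑(a⁻¹) : Matrix (Fin g ⊕ Fin g) (Fin g ⊕ Fin g) ℤ)ᵀ *
            ((↑a)ᵀ * Jmat g * ↑a) * ↑(a⁻¹) := by rw [ha]
      _ = ((a : Matrix (Fin g ⊕ Fin g) (Fin g ⊕ Fin g) ℤ) *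
            (↑(a⁻¹) : Matrix (Fin g ⊕ Fin g) (Fin g ⊕ Fin g) ℤ))ᵀ * Jmat g *
            ((a : Matrix (Fin g ⊕ Fin g) (Fin g ⊕ Fin g) ℤ) *
            (↑(a⁻¹) : Matrix (Fin g ⊕ Fin g) (Fin g ⊕ Fin g) ℤ)) := by
          rw [Matrix.transpose_mul]
          simp only [Matrix.mul_assoc]
      _ = Jmat g := by rw [h1]; simp

/-- The matrix `M_{i,j} = [[I_g, m_{i,j}], [0, I_g]]` where `m_{i,j}` has `1` at positions
`(i,j)` and `(j,i)` and `0` elsewhere. -/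
def Mmat (g : ℕ) (i j : Fin g) : Matrix (Fin g ⊕ Fin g) (Fin g ⊕ Fin g) ℤ :=
  Matrix.fromBlocks 1
    (Matrix.of fun k l => if (k = i ∧ l = j) ∨ (k = j ∧ l = i) then 1 else 0) 0 1

namespace SpGen

open Matrix

variable {g : ℕ}

abbrev Mat (g : ℕ) := Matrix (Fin g ⊕ Fin g) (Fin g ⊕ Fin g) ℤ

/-- matrix of an element of `Sp g` -/
def mval (γ : Sp g) : Mat g := ((γ : Matrix.GeneralLinearGroup (Fin g ⊕ Fin g) ℤ) : Mat g)

def IsSpM (M : Mat g) : Prop := Mᵀ * Jmat g * M = Jmat g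

/-- the generating set from the theorem statement -/
def Gen (g : ℕ) : Set (Sp g) :=
  ({γ : Sp g | ((γ : Matrix.GeneralLinearGroup (Fin g ⊕ Fin g) ℤ) :
          Matrix (Fin g ⊕ Fin g) (Fin g ⊕ Fin g) ℤ) = Jmat g} ∪
       {γ : Sp g | ∃ i j : Fin g, i ≤ j ∧
          ((γ : Matrix.GeneralLinearGroup (Fin g ⊕ Fin g) ℤ) :
          Matrix (Fin g ⊕ Fin g) (Fin g ⊕ Fin g) ℤ) = Mmat g i j})

def Gp (g : ℕ) : Subgroup (Sp g) := Subgroup.closure (Gen g)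

/-- `M` is the matrix of an element of the subgroup generated by the generators. -/
def Red (M : Mat g) : Prop := ∃ γ : Sp g, γ ∈ Gp g ∧ mval γ = M

lemma isSpM_mval (γ : Sp g) : IsSpM (mval γ) := γ.2

lemma Red.isSpM {M : Mat g} (h : Red M) : IsSpM M := by
  obtain ⟨γ, _, rfl⟩ := h; exact isSpM_mval γ

lemma mval_mul (γ δ : Sp g) : mval (γ * δ) = mval γ * mval δ := rfl

lemma Red.one : Red (1 : Mat g) := ⟨1, Subgroup.one_mem _, rfl⟩

lemma Red.mul {M N : Mat g} (hM : Red M) (hN : Red N) : Red (M * N) := by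
  obtain ⟨γ, hγ, rfl⟩ := hM; obtain ⟨δ, hδ, rfl⟩ := hN
  exact ⟨γ * δ, Subgroup.mul_mem _ hγ hδ, rfl⟩

/-- matrices of elements of `Sp g` are invertible, with inverses -/
lemma mval_mul_inv (γ : Sp g) : mval γ * mval γ⁻¹ = 1 := by
  have : ((γ : Matrix.GeneralLinearGroup (Fin g ⊕ Fin g) ℤ) *
    ((γ⁻¹ : Sp g) : Matrix.GeneralLinearGroup (Fin g ⊕ Fin g) ℤ)) = 1 := by
    rw [← Subgroup.coe_mul, mul_inv_cancel, Subgroup.coe_one]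
  calc mval γ * mval γ⁻¹ = (((γ : Matrix.GeneralLinearGroup (Fin g ⊕ Fin g) ℤ) *
      ((γ⁻¹ : Sp g) : Matrix.GeneralLinearGroup (Fin g ⊕ Fin g) ℤ) :
        Matrix.GeneralLinearGroup (Fin g ⊕ Fin g) ℤ) : Mat g) := rfl
    _ = 1 := by rw [this]; rfl

lemma mval_inv_mul (γ : Sp g) : mval γ⁻¹ * mval γ = 1 := by
  have := mval_mul_inv γ⁻¹; rwa [inv_inv] at this

lemma Red.inv {M N : Mat g} (hM : Red M) (h : M * N = 1) : Red N := by
  obtain ⟨γ, hγ, rfl⟩ := hM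
  refine ⟨γ⁻¹, Subgroup.inv_mem _ hγ, ?_⟩
  have h2 := mval_inv_mul γ
  calc mval γ⁻¹ = mval γ⁻¹ * (mval γ * N) := by rw [h, mul_one]
    _ = (mval γ⁻¹ * mval γ) * N := by rw [mul_assoc]
    _ = N := by rw [h2, one_mul]

/-- cancel a reducible factor on the left -/
lemma Red.cancel {P M : Mat g} (hP : Red P) (hPM : Red (P * M)) : Red M := by
  obtain ⟨γ, hγ, hγP⟩ := hP
  have hinv : Red (mval γ⁻¹) := ⟨γ⁻¹, Subgroup.inv_mem _ hγ, rfl⟩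
  have : mval γ⁻¹ * (P * M) = M := by
    rw [← hγP, ← mul_assoc, mval_inv_mul, one_mul]
  have := hinv.mul hPM
  rwa [show mval γ⁻¹ * (P * M) = M from by rw [← hγP, ← mul_assoc, mval_inv_mul, one_mul]] at this

lemma IsSpM.mul {M N : Mat g} (hM : IsSpM M) (hN : IsSpM N) : IsSpM (M * N) := by
  unfold IsSpM at *
  rw [transpose_mul]
  calc Nᵀ * Mᵀ * Jmat g * (M * N) = Nᵀ * (Mᵀ * Jmat g * M) * N := by
        simp only [Matrix.mul_assoc]
    _ = Jmat g := by rw [hM, hN]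

end SpGen
namespace SpGen

open Matrix

variable {g : ℕ}

/-- upper unipotent block matrix -/
def Um (S : Matrix (Fin g) (Fin g) ℤ) : Mat g := fromBlocks 1 S 0 1

/-- lower unipotent block matrix -/
def Lm (S : Matrix (Fin g) (Fin g) ℤ) : Mat g := fromBlocks 1 0 S 1

lemma Um_mul (S T : Matrix (Fin g) (Fin g) ℤ) : Um S * Um T = Um (S + T) := by
  simp [Um, fromBlocks_multiply, add_comm]

lemma Um_zero : Um (0 : Matrix (Fin g) (Fin g) ℤ) = 1 := by
  simp [Um, fromBlocks_one]

lemma isSpM_Um {S : Matrix (Fin g) (Fin g) ℤ} (hS : Sᵀ = S) : IsSpM (Um S) := by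
  unfold IsSpM
  simp [Um, Jmat, fromBlocks_transpose, fromBlocks_multiply, hS]

lemma Jmat_sq : Jmat g * Jmat g = -1 := by
  have h : (-1 : Mat g) = fromBlocks (-1) (-0) (-0) (-1) := by
    rw [← Matrix.fromBlocks_neg, fromBlocks_one]
  simp [Jmat, fromBlocks_multiply, h]

lemma Jmat_transpose : (Jmat g)ᵀ = -Jmat g := by
  simp only [Jmat, fromBlocks_transpose, Matrix.fromBlocks_neg]
  simp

lemma isSpM_J : IsSpM (Jmat g) := by
  unfold IsSpM
  rw [Jmat_transpose]
  calc -Jmat g * Jmat g * Jmat g = -(Jmat g * Jmat g) * Jmat g := by rw [neg_mul]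
    _ = Jmat g := by rw [Jmat_sq]; simp

/-- build an element of `Sp g` from a matrix, its inverse, and the symplectic relation -/
def mkSp (P Pi : Mat g) (h1 : P * Pi = 1) (h2 : Pi * P = 1) (h3 : IsSpM P) : Sp g :=
  ⟨⟨P, Pi, h1, h2⟩, h3⟩

lemma mval_mkSp (P Pi : Mat g) (h1 h2 h3) : mval (mkSp P Pi h1 h2 h3) = P := rfl

lemma Red_J : Red (Jmat g) := by
  refine ⟨mkSp (Jmat g) (-Jmat g) ?_ ?_ isSpM_J, Subgroup.subset_closure (Or.inl rfl), rfl⟩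
  · rw [mul_neg, Jmat_sq]; simp
  · rw [neg_mul, Jmat_sq]; simp

/-- the elementary symmetric matrices -/
def mm (i j : Fin g) : Matrix (Fin g) (Fin g) ℤ :=
  Matrix.of fun k l => if (k = i ∧ l = j) ∨ (k = j ∧ l = i) then 1 else 0

lemma mm_transpose (i j : Fin g) : (mm i j)ᵀ = mm i j := by
  ext k l
  simp only [transpose_apply, mm, Matrix.of_apply]
  exact if_congr (by tauto) rfl rfl

lemma Mmat_eq_Um (i j : Fin g) : Mmat g i j = Um (mm i j) := rfl

lemma Red_mm (i j : Fin g) (hij : i ≤ j) : Red (Um (mm i j)) := by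
  refine ⟨mkSp (Um (mm i j)) (Um (-mm i j)) ?_ ?_ (isSpM_Um (mm_transpose i j)),
    Subgroup.subset_closure (Or.inr ⟨i, j, hij, rfl⟩), rfl⟩
  · rw [Um_mul]; simp [Um_zero]
  · rw [Um_mul]; simp [Um_zero]

/-- symmetric matrices `S` with `Red (Um S)` form an additive subgroup -/
def RedSym (g : ℕ) : AddSubgroup (Matrix (Fin g) (Fin g) ℤ) where
  carrier := {S | Sᵀ = S ∧ Red (Um S)}
  zero_mem' := ⟨transpose_zero, by rw [Um_zero]; exact Red.one⟩
  add_mem' := by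
    rintro a b ⟨ha1, ha2⟩ ⟨hb1, hb2⟩
    exact ⟨by rw [transpose_add, ha1, hb1], by rw [← Um_mul]; exact ha2.mul hb2⟩
  neg_mem' := by
    rintro a ⟨ha1, ha2⟩
    refine ⟨by rw [transpose_neg, ha1], ha2.inv ?_⟩
    rw [Um_mul]; simp [Um_zero]

end SpGen
namespace SpGen

open Matrix

variable {g : ℕ}

lemma sym_decomp (S : Matrix (Fin g) (Fin g) ℤ) (hS : Sᵀ = S) :
    S = ∑ p ∈ Finset.univ.filter (fun p : Fin g × Fin g => p.1 ≤ p.2),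
      S p.1 p.2 • mm p.1 p.2 := by
  ext k l
  rw [Matrix.sum_apply]
  rcases le_total k l with h | h
  · rw [Finset.sum_eq_single (k, l)]
    · simp [mm]
    · rintro ⟨a, b⟩ hp hne
      simp only [Finset.mem_filter] at hp
      simp only [Matrix.smul_apply, mm, Matrix.of_apply, smul_eq_mul]
      rw [if_neg, mul_zero]
      rintro (⟨rfl, rfl⟩ | ⟨rfl, rfl⟩)
      · exact hne rfl
      · have : k = l := le_antisymm h hp.2
        subst this; exact hne rfl
    · exact fun hnot => absurd (by simp [h]) hnot
  · rw [Finset.sum_eq_single (l, k)]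
    · have hS' : S l k = S k l := congrFun (congrFun hS k) l
      simp [mm, hS']
    · rintro ⟨a, b⟩ hp hne
      simp only [Finset.mem_filter] at hp
      simp only [Matrix.smul_apply, mm, Matrix.of_apply, smul_eq_mul]
      rw [if_neg, mul_zero]
      rintro (⟨rfl, rfl⟩ | ⟨rfl, rfl⟩)
      · have : k = l := le_antisymm hp.2 h
        subst this; exact hne rfl
      · exact hne rfl
    · exact fun hnot => absurd (by simp [h]) hnot

lemma mem_RedSym {S : Matrix (Fin g) (Fin g) ℤ} :
    S ∈ RedSym g ↔ Sᵀ = S ∧ Red (Um S) := Iff.rfl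

lemma Red_Um (S : Matrix (Fin g) (Fin g) ℤ) (hS : Sᵀ = S) : Red (Um S) := by
  have h2 : (∑ p ∈ Finset.univ.filter (fun p : Fin g × Fin g => p.1 ≤ p.2),
      S p.1 p.2 • mm p.1 p.2) ∈ RedSym g := by
    apply AddSubgroup.sum_mem
    rintro ⟨a, b⟩ hp
    simp only [Finset.mem_filter] at hp
    exact AddSubgroup.zsmul_mem _ (mem_RedSym.mpr ⟨mm_transpose a b, Red_mm a b hp.2⟩) _
  rw [← sym_decomp S hS] at h2
  exact (mem_RedSym.mp h2).2

lemma Red_negJ : Red (-Jmat g) := by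
  apply Red_J.inv
  rw [mul_neg, Jmat_sq, neg_neg]

lemma Red_Lm (S : Matrix (Fin g) (Fin g) ℤ) (hS : Sᵀ = S) : Red (Lm S) := by
  have key : Jmat g * Um (-S) * (-Jmat g) = Lm S := by
    simp only [Jmat, Um, Lm, Matrix.fromBlocks_neg, fromBlocks_multiply]
    simp
  rw [← key]
  exact (Red_J.mul (Red_Um (-S) (by rw [transpose_neg, hS]))).mul Red_negJ

/-- diagonal idempotent -/
def ee (i : Fin g) : Matrix (Fin g) (Fin g) ℤ := Matrix.single i i 1

lemma ee_mul_ee (i : Fin g) : ee i * ee i = ee i := by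
  simp [ee, Matrix.single_mul_single_same]

lemma ee_transpose (i : Fin g) : (ee i)ᵀ = ee i := by
  ext k l
  simp [ee, Matrix.single, and_comm]

/-- the partial `J` acting on the `i`-th coordinate pair -/
def Jim (i : Fin g) : Mat g := fromBlocks (1 - ee i) (ee i) (-ee i) (1 - ee i)

/-- inverse of the partial `J` -/
def Jiinvm (i : Fin g) : Mat g := fromBlocks (1 - ee i) (-ee i) (ee i) (1 - ee i)

lemma neg_ee_transpose (i : Fin g) : (-ee i)ᵀ = -ee i := by
  rw [transpose_neg, ee_transpose i]

lemma Red_Jim (i : Fin g) : Red (Jim i) := by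
  have e2 := ee_mul_ee i
  have step1 : Um (ee i) * Lm (-ee i) = fromBlocks (1 - ee i) (ee i) (-ee i) 1 := by
    rw [Um, Lm, fromBlocks_multiply, fromBlocks_inj]
    refine ⟨?_, ?_, ?_, ?_⟩ <;>
      simp only [mul_neg, neg_mul, sub_mul, mul_sub, one_mul, mul_one, e2, zero_mul, mul_zero,
        add_zero, zero_add, sub_self] <;> abel
  have key : Um (ee i) * Lm (-ee i) * Um (ee i) = Jim i := by
    rw [step1, Um, Jim, fromBlocks_multiply, fromBlocks_inj]
    refine ⟨?_, ?_, ?_, ?_⟩ <;>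
      simp only [mul_neg, neg_mul, sub_mul, mul_sub, one_mul, mul_one, e2, zero_mul, mul_zero,
        add_zero, zero_add, sub_self] <;> abel
  rw [← key]
  exact ((Red_Um _ (ee_transpose i)).mul (Red_Lm _ (neg_ee_transpose i))).mul
    (Red_Um _ (ee_transpose i))

lemma Red_Jiinvm (i : Fin g) : Red (Jiinvm i) := by
  have e2 := ee_mul_ee i
  have step1 : Um (-ee i) * Lm (ee i) = fromBlocks (1 - ee i) (-ee i) (ee i) 1 := by
    rw [Um, Lm, fromBlocks_multiply, fromBlocks_inj]
    refine ⟨?_, ?_, ?_, ?_⟩ <;>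
      simp only [mul_neg, neg_mul, sub_mul, mul_sub, one_mul, mul_one, e2, zero_mul, mul_zero,
        add_zero, zero_add, sub_self] <;> abel
  have key : Um (-ee i) * Lm (ee i) * Um (-ee i) = Jiinvm i := by
    rw [step1, Um, Jiinvm, fromBlocks_multiply, fromBlocks_inj]
    refine ⟨?_, ?_, ?_, ?_⟩ <;>
      simp only [mul_neg, neg_mul, sub_mul, mul_sub, one_mul, mul_one, e2, zero_mul, mul_zero,
        add_zero, zero_add, sub_self] <;> abel
  rw [← key]
  exact ((Red_Um _ (neg_ee_transpose i)).mul (Red_Lm _ (ee_transpose i))).mul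
    (Red_Um _ (neg_ee_transpose i))

end SpGen
namespace SpGen

open Matrix Sum

variable {g : ℕ}

lemma Um_mul_apply_inl (S : Matrix (Fin g) (Fin g) ℤ) (M : Mat g) (i : Fin g)
    (v : Fin g ⊕ Fin g) :
    (Um S * M) (inl i) v = M (inl i) v + ∑ k, S i k * M (inr k) v := by
  rw [Matrix.mul_apply, Fintype.sum_sum_type]
  simp [Um, Matrix.one_apply, ite_mul, Finset.sum_ite_eq]

lemma Um_mul_apply_inr (S : Matrix (Fin g) (Fin g) ℤ) (M : Mat g) (i : Fin g)
    (v : Fin g ⊕ Fin g) :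
    (Um S * M) (inr i) v = M (inr i) v := by
  rw [Matrix.mul_apply, Fintype.sum_sum_type]
  simp [Um, Matrix.one_apply, ite_mul, Finset.sum_ite_eq]

lemma Lm_mul_apply_inr (S : Matrix (Fin g) (Fin g) ℤ) (M : Mat g) (i : Fin g)
    (v : Fin g ⊕ Fin g) :
    (Lm S * M) (inr i) v = M (inr i) v + ∑ k, S i k * M (inl k) v := by
  rw [Matrix.mul_apply, Fintype.sum_sum_type]
  simp [Lm, Matrix.one_apply, ite_mul, Finset.sum_ite_eq, add_comm]

lemma Lm_mul_apply_inl (S : Matrix (Fin g) (Fin g) ℤ) (M : Mat g) (i : Fin g)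
    (v : Fin g ⊕ Fin g) :
    (Lm S * M) (inl i) v = M (inl i) v := by
  rw [Matrix.mul_apply, Fintype.sum_sum_type]
  simp [Lm, Matrix.one_apply, ite_mul, Finset.sum_ite_eq]

lemma sb_transpose (i j : Fin g) (t : ℤ) :
    (single i j t)ᵀ = single j i t := by
  ext k l
  simp [single, and_comm]

lemma Red_U1 (i : Fin g) (t : ℤ) : Red (Um (single i i t)) :=
  Red_Um _ (sb_transpose i i t)

lemma Red_U2 (i j : Fin g) (t : ℤ) :
    Red (Um (single i j t + single j i t)) :=
  Red_Um _ (by rw [transpose_add, sb_transpose, sb_transpose, add_comm])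

lemma Red_L1 (i : Fin g) (t : ℤ) : Red (Lm (single i i t)) :=
  Red_Lm _ (sb_transpose i i t)

lemma Red_L2 (i j : Fin g) (t : ℤ) :
    Red (Lm (single i j t + single j i t)) :=
  Red_Lm _ (by rw [transpose_add, sb_transpose, sb_transpose, add_comm])

lemma U1_apply (i : Fin g) (t : ℤ) (M : Mat g) (u v : Fin g ⊕ Fin g) :
    (Um (single i i t) * M) u v =
      M u v + (if u = inl i then t * M (inr i) v else 0) := by
  cases u with
  | inl a =>
    rw [Um_mul_apply_inl]
    by_cases h : a = i
    · subst h; simp [single, ite_mul, Finset.sum_ite_eq]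
    · simp [single, ite_mul, Ne.symm h, h]
  | inr a => rw [Um_mul_apply_inr]; simp

lemma L1_apply (i : Fin g) (t : ℤ) (M : Mat g) (u v : Fin g ⊕ Fin g) :
    (Lm (single i i t) * M) u v =
      M u v + (if u = inr i then t * M (inl i) v else 0) := by
  cases u with
  | inr a =>
    rw [Lm_mul_apply_inr]
    by_cases h : a = i
    · subst h; simp [single, ite_mul, Finset.sum_ite_eq]
    · simp [single, ite_mul, Ne.symm h, h]
  | inl a => rw [Lm_mul_apply_inl]; simp

lemma U2_apply (i j : Fin g) (hij : i ≠ j) (t : ℤ) (M : Mat g) (u v : Fin g ⊕ Fin g) :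
    (Um (single i j t + single j i t) * M) u v =
      M u v + (if u = inl i then t * M (inr j) v else
        if u = inl j then t * M (inr i) v else 0) := by
  cases u with
  | inl a =>
    rw [Um_mul_apply_inl]
    by_cases h : a = i
    · subst h
      simp [single, Matrix.add_apply, add_mul, ite_mul, Finset.sum_ite_eq,
        Ne.symm hij, hij]
    · by_cases h2 : a = j
      · subst h2
        simp [single, Matrix.add_apply, add_mul, ite_mul, Finset.sum_ite_eq,
          Ne.symm hij, hij, h]
      · simp [single, Matrix.add_apply, add_mul, ite_mul,
          Ne.symm h, Ne.symm h2, h, h2]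
  | inr a => rw [Um_mul_apply_inr]; simp

lemma L2_apply (i j : Fin g) (hij : i ≠ j) (t : ℤ) (M : Mat g) (u v : Fin g ⊕ Fin g) :
    (Lm (single i j t + single j i t) * M) u v =
      M u v + (if u = inr i then t * M (inl j) v else
        if u = inr j then t * M (inl i) v else 0) := by
  cases u with
  | inr a =>
    rw [Lm_mul_apply_inr]
    by_cases h : a = i
    · subst h
      simp [single, Matrix.add_apply, add_mul, ite_mul, Finset.sum_ite_eq,
        Ne.symm hij, hij]
    · by_cases h2 : a = j
      · subst h2
        simp [single, Matrix.add_apply, add_mul, ite_mul, Finset.sum_ite_eq,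
          Ne.symm hij, hij, h]
      · simp [single, Matrix.add_apply, add_mul, ite_mul,
          Ne.symm h, Ne.symm h2, h, h2]
  | inl a => rw [Lm_mul_apply_inl]; simp

lemma Jim_mul_apply (i : Fin g) (M : Mat g) (u v : Fin g ⊕ Fin g) :
    (Jim i * M) u v = if u = inl i then M (inr i) v else
      if u = inr i then -(M (inl i) v) else M u v := by
  cases u with
  | inl a =>
    rw [Matrix.mul_apply, Fintype.sum_sum_type]
    by_cases h : a = i
    · subst h
      simp [Jim, ee, single, Matrix.sub_apply, Matrix.one_apply, ite_mul, sub_mul,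
        Finset.sum_ite_eq]
    · simp [Jim, ee, single, Matrix.sub_apply, Matrix.one_apply, ite_mul, sub_mul,
        Finset.sum_ite_eq, h, Ne.symm h]
  | inr a =>
    rw [Matrix.mul_apply, Fintype.sum_sum_type]
    by_cases h : a = i
    · subst h
      simp [Jim, ee, single, Matrix.sub_apply, Matrix.one_apply, ite_mul, sub_mul,
        Matrix.neg_apply, neg_mul, Finset.sum_ite_eq]
    · simp [Jim, ee, single, Matrix.sub_apply, Matrix.one_apply, ite_mul, sub_mul,
        Matrix.neg_apply, neg_mul, Finset.sum_ite_eq, h, Ne.symm h]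

lemma Jiinvm_mul_apply (i : Fin g) (M : Mat g) (u v : Fin g ⊕ Fin g) :
    (Jiinvm i * M) u v = if u = inl i then -(M (inr i) v) else
      if u = inr i then M (inl i) v else M u v := by
  cases u with
  | inl a =>
    rw [Matrix.mul_apply, Fintype.sum_sum_type]
    by_cases h : a = i
    · subst h
      simp [Jiinvm, ee, single, Matrix.sub_apply, Matrix.one_apply, ite_mul, sub_mul,
        Matrix.neg_apply, neg_mul, Finset.sum_ite_eq]
    · simp [Jiinvm, ee, single, Matrix.sub_apply, Matrix.one_apply, ite_mul, sub_mul,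
        Matrix.neg_apply, neg_mul, Finset.sum_ite_eq, h, Ne.symm h]
  | inr a =>
    rw [Matrix.mul_apply, Fintype.sum_sum_type]
    by_cases h : a = i
    · subst h
      simp [Jiinvm, ee, single, Matrix.sub_apply, Matrix.one_apply, ite_mul, sub_mul,
        Finset.sum_ite_eq]
    · simp [Jiinvm, ee, single, Matrix.sub_apply, Matrix.one_apply, ite_mul, sub_mul,
        Finset.sum_ite_eq, h, Ne.symm h]

end SpGen
namespace SpGen

open Matrix Sum

variable {g : ℕ}

/-- reachability via left multiplication by reducible matrices -/
def Rel (M N : Mat g) : Prop := ∃ P : Mat g, Red P ∧ N = P * M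

lemma Rel.refl (M : Mat g) : Rel M M := ⟨1, Red.one, (one_mul M).symm⟩

lemma Rel.ofRed {P : Mat g} (hP : Red P) (M : Mat g) : Rel M (P * M) := ⟨P, hP, rfl⟩

lemma Rel.trans {M N K : Mat g} (h1 : Rel M N) (h2 : Rel N K) : Rel M K := by
  obtain ⟨P, hP, rfl⟩ := h1
  obtain ⟨Q, hQ, rfl⟩ := h2
  exact ⟨Q * P, hQ.mul hP, (mul_assoc Q P M).symm⟩

lemma Rel.red {M N : Mat g} (h : Rel M N) (hN : Red N) : Red M := by
  obtain ⟨P, hP, rfl⟩ := h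
  exact hP.cancel hN

lemma Rel.isSpM {M N : Mat g} (h : Rel M N) (hM : IsSpM M) : IsSpM N := by
  obtain ⟨P, hP, rfl⟩ := h
  exact hP.isSpM.mul hM

lemma natAbs_emod_lt (a b : ℤ) (hb : b ≠ 0) : (a % b).natAbs < b.natAbs := by
  rcases lt_or_gt_of_ne hb with h | h
  · have h2 : a % b = a % (-b) := (Int.emod_neg a b).symm
    have h3 : 0 ≤ a % (-b) := Int.emod_nonneg a (by omega)
    have h4 : a % (-b) < -b := Int.emod_lt_of_pos a (by omega)
    omega
  · have h3 : 0 ≤ a % b := Int.emod_nonneg a hb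
    have h4 : a % b < b := Int.emod_lt_of_pos a h
    omega

/-- The abstract Euclidean algorithm: with moves adding any multiple of `h` to `f` and
any multiple of `f` to `h`, preserving a predicate `Q`, one can reach `h = 0`. -/
lemma euclid (Q : Mat g → Prop) (f h : Mat g → ℤ)
    (m1 : ∀ (t : ℤ) (M), Q M → ∃ P, Red P ∧ Q (P * M) ∧
      f (P * M) = f M + t * h M ∧ h (P * M) = h M)
    (m2 : ∀ (t : ℤ) (M), Q M → ∃ P, Red P ∧ Q (P * M) ∧
      h (P * M) = h M + t * f M ∧ f (P * M) = f M) :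
    ∀ (n : ℕ) (M), Q M → (h M).natAbs ≤ n → ∃ N, Rel M N ∧ Q N ∧ h N = 0 := by
  intro n
  induction n using Nat.strong_induction_on with
  | _ n IH =>
    intro M hQ hle
    by_cases hh : h M = 0
    · exact ⟨M, Rel.refl M, hQ, hh⟩
    · obtain ⟨P₁, hP₁, hQ₁, hf₁, hh₁⟩ := m1 (-(f M / h M)) M hQ
      set M₁ := P₁ * M with hM₁def
      have hfM₁ : f M₁ = f M % h M := by
        rw [hf₁, Int.emod_def, neg_mul, mul_comm]; ring
      by_cases hr : f M₁ = 0
      · -- f M₁ = 0, h M₁ = h M ≠ 0 : shift then subtract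
        obtain ⟨P₂, hP₂, hQ₂, hf₂, hh₂⟩ := m1 1 M₁ hQ₁
        set M₂ := P₂ * M₁
        obtain ⟨P₃, hP₃, hQ₃, hh₃, hf₃⟩ := m2 (-1) M₂ hQ₂
        refine ⟨P₃ * M₂, ((Rel.ofRed hP₁ M).trans (Rel.ofRed hP₂ M₁)).trans
          (Rel.ofRed hP₃ M₂), hQ₃, ?_⟩
        rw [hh₃, hh₂, hf₂, hr, hh₁]; ring
      · obtain ⟨P₂, hP₂, hQ₂, hh₂, hf₂⟩ := m2 (-(h M₁ / f M₁)) M₁ hQ₁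
        set M₂ := P₂ * M₁
        have hhM₂ : h M₂ = h M₁ % f M₁ := by
          rw [hh₂, Int.emod_def, neg_mul, mul_comm]; ring
        have hlt : (h M₂).natAbs < n := by
          have l1 : (h M₂).natAbs < (f M₁).natAbs := by
            rw [hhM₂]; exact natAbs_emod_lt _ _ hr
          have l2 : (f M₁).natAbs < (h M).natAbs := by
            rw [hfM₁]; exact natAbs_emod_lt _ _ hh
          omega
        obtain ⟨N, hrel, hQN, hhN⟩ := IH (h M₂).natAbs hlt M₂ hQ₂ le_rfl
        exact ⟨N, ((Rel.ofRed hP₁ M).trans (Rel.ofRed hP₂ M₁)).trans hrel, hQN, hhN⟩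

end SpGen
namespace SpGen

open Matrix Sum

variable {g : ℕ}

lemma Jmul_apply_inl (M : Mat g) (i : Fin g) (v : Fin g ⊕ Fin g) :
    (Jmat g * M) (inl i) v = M (inr i) v := by
  rw [Matrix.mul_apply, Fintype.sum_sum_type]
  simp [Jmat, Matrix.one_apply, ite_mul, Finset.sum_ite_eq]

lemma Jmul_apply_inr (M : Mat g) (i : Fin g) (v : Fin g ⊕ Fin g) :
    (Jmat g * M) (inr i) v = -(M (inl i) v) := by
  rw [Matrix.mul_apply, Fintype.sum_sum_type]
  simp [Jmat, Matrix.one_apply, Matrix.neg_apply, ite_mul, neg_mul, Finset.sum_ite_eq]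

lemma isSpM_entry {M : Mat g} (h : IsSpM M) (u v : Fin g ⊕ Fin g) :
    ∑ i, (M (inl i) u * M (inr i) v - M (inr i) u * M (inl i) v) = Jmat g u v := by
  have h3 : Mᵀ * (Jmat g * M) = Jmat g := by rw [← mul_assoc]; exact h
  have h4 := congrFun (congrFun h3 u) v
  rw [Matrix.mul_apply, Fintype.sum_sum_type] at h4
  simp only [transpose_apply, Jmul_apply_inl, Jmul_apply_inr, mul_neg] at h4
  rw [← h4, Finset.sum_sub_distrib]
  simp [sub_eq_add_neg]

lemma Jmat_entry_ll (k l : Fin g) : Jmat g (inl k) (inl l) = 0 := rfl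
lemma Jmat_entry_lr (k l : Fin g) : Jmat g (inl k) (inr l) = if k = l then 1 else 0 :=
  Matrix.one_apply
lemma Jmat_entry_rr (k l : Fin g) : Jmat g (inr k) (inr l) = 0 := rfl

lemma det_Jmat_sq : (Jmat g).det * (Jmat g).det = 1 := by
  have h : (Jmat g).det * (Jmat g).det = ((-1 : Mat g)).det := by
    rw [← det_mul, Jmat_sq]
  rw [h, det_neg, det_one, mul_one, Fintype.card_sum, Fintype.card_fin]
  exact Even.neg_one_pow (⟨g, rfl⟩ : Even (g + g))

lemma isSpM_det {M : Mat g} (h : IsSpM M) : IsUnit M.det := by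
  have h1 : M.det * (Jmat g).det * M.det = (Jmat g).det := by
    have := congrArg Matrix.det h
    rwa [det_mul, det_mul, det_transpose] at this
  have hJ : (Jmat g).det ≠ 0 := by
    intro h0
    have := det_Jmat_sq (g := g)
    rw [h0, mul_zero] at this
    exact absurd this (by norm_num)
  have h2 : M.det * M.det = 1 := by
    have h3 : (M.det * M.det) * (Jmat g).det = 1 * (Jmat g).det := by
      calc (M.det * M.det) * (Jmat g).det = M.det * (Jmat g).det * M.det := by ring
        _ = (Jmat g).det := h1
        _ = 1 * (Jmat g).det := (one_mul _).symm
    exact mul_right_cancel₀ hJ h3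
  exact IsUnit.of_mul_eq_one _ h2

end SpGen
namespace SpGen

open Matrix Sum

variable {g : ℕ}

/-- invariant: the first `j` columns of `(A; C)` are cleared up to upper-triangular `A` -/
def Inv (j : ℕ) (M : Mat g) : Prop :=
  ∀ k : Fin g, (k : ℕ) < j →
    (∀ i : Fin g, k < i → M (inl i) (inl k) = 0) ∧
    (∀ i : Fin g, M (inr i) (inl k) = 0) ∧
    M (inl k) (inl k) ≠ 0

lemma Inv_zero (M : Mat g) : Inv 0 M := fun k hk => absurd hk (Nat.not_lt_zero _)

lemma alpha (j : Fin g) :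
    ∀ s : Finset (Fin g), (∀ i ∈ s, j ≤ i) → ∀ M : Mat g, Inv j M →
      ∃ N, Rel M N ∧ Inv j N ∧ ∀ i ∈ s, N (inr i) (inl j) = 0 := by
  intro s
  induction s using Finset.induction_on with
  | empty => intro _ M hM; exact ⟨M, Rel.refl M, hM, by simp⟩
  | @insert a s' ha IH =>
    intro hs M hM
    obtain ⟨N₁, hrel₁, hInv₁, hz₁⟩ := IH (fun i hi => hs i (Finset.mem_insert_of_mem hi)) M hM
    have haj : (j : ℕ) ≤ (a : ℕ) := hs a (Finset.mem_insert_self a s')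
    set Q : Mat g → Prop := fun X => Inv j X ∧ ∀ i ∈ s', X (inr i) (inl j) = 0 with hQdef
    have m1 : ∀ (t : ℤ) (X : Mat g), Q X → ∃ P, Red P ∧ Q (P * X) ∧
        (P * X) (inl a) (inl j) = X (inl a) (inl j) + t * X (inr a) (inl j) ∧
        (P * X) (inr a) (inl j) = X (inr a) (inl j) := by
      intro t X hQ
      refine ⟨Um (single a a t), Red_U1 a t, ⟨?_, ?_⟩, ?_, ?_⟩
      · intro k hk
        obtain ⟨h1, h2, h3⟩ := hQ.1 k hk
        refine ⟨fun i hi => ?_, fun i => ?_, ?_⟩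
        · rw [U1_apply]
          by_cases hia : i = a
          · subst hia; rw [if_pos rfl, h2 i, mul_zero, add_zero]; exact h1 i hi
          · rw [if_neg (by simp [hia]), add_zero]; exact h1 i hi
        · rw [U1_apply, if_neg (by simp), add_zero]; exact h2 i
        · have hka : k ≠ a := by
            intro he; rw [he] at hk; omega
          rw [U1_apply, if_neg (by simp [hka]), add_zero]; exact h3
      · intro i hi
        rw [U1_apply, if_neg (by simp), add_zero]; exact hQ.2 i hi
      · rw [U1_apply, if_pos rfl]
      · rw [U1_apply, if_neg (by simp), add_zero]
    have m2 : ∀ (t : ℤ) (X : Mat g), Q X → ∃ P, Red P ∧ Q (P * X) ∧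
        (P * X) (inr a) (inl j) = X (inr a) (inl j) + t * X (inl a) (inl j) ∧
        (P * X) (inl a) (inl j) = X (inl a) (inl j) := by
      intro t X hQ
      refine ⟨Lm (single a a t), Red_L1 a t, ⟨?_, ?_⟩, ?_, ?_⟩
      · intro k hk
        obtain ⟨h1, h2, h3⟩ := hQ.1 k hk
        refine ⟨fun i hi => ?_, fun i => ?_, ?_⟩
        · rw [L1_apply, if_neg (by simp), add_zero]; exact h1 i hi
        · rw [L1_apply]
          by_cases hia : i = a
          · subst hia
            rw [if_pos rfl, h1 i (by rw [Fin.lt_def]; omega), mul_zero, add_zero]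
            exact h2 i
          · rw [if_neg (by simp [hia]), add_zero]; exact h2 i
        · rw [L1_apply, if_neg (by simp), add_zero]; exact h3
      · intro i hi
        rw [L1_apply]
        by_cases hia : i = a
        · exact absurd (hia ▸ hi) ha
        · rw [if_neg (by simp [hia]), add_zero]; exact hQ.2 i hi
      · rw [L1_apply, if_pos rfl]
      · rw [L1_apply, if_neg (by simp), add_zero]
    obtain ⟨N, hrelN, hQN, hzN⟩ := euclid Q (fun X => X (inl a) (inl j))
      (fun X => X (inr a) (inl j)) m1 m2 (N₁ (inr a) (inl j)).natAbs N₁ ⟨hInv₁, hz₁⟩ le_rfl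
    refine ⟨N, hrel₁.trans hrelN, hQN.1, fun i hi => ?_⟩
    rcases Finset.mem_insert.mp hi with rfl | hi'
    · exact hzN
    · exact hQN.2 i hi'

end SpGen
namespace SpGen

open Matrix Sum

variable {g : ℕ}

lemma beta (j : Fin g) :
    ∀ s : Finset (Fin g), (∀ i ∈ s, j < i) → ∀ M : Mat g, Inv j M →
      (∀ i : Fin g, j ≤ i → M (inr i) (inl j) = 0) →
      ∃ N, Rel M N ∧ Inv j N ∧ (∀ i : Fin g, j ≤ i → N (inr i) (inl j) = 0) ∧
        ∀ i ∈ s, N (inl i) (inl j) = 0 := by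
  intro s
  induction s using Finset.induction_on with
  | empty => intro _ M hM hC; exact ⟨M, Rel.refl M, hM, hC, by simp⟩
  | @insert a s' ha IH =>
    intro hs M hM hC
    obtain ⟨N₁, hrel₁, hInv₁, hC₁, hz₁⟩ :=
      IH (fun i hi => hs i (Finset.mem_insert_of_mem hi)) M hM hC
    have hja : j < a := hs a (Finset.mem_insert_self a s')
    have hjan : (j : ℕ) < (a : ℕ) := hja
    have hjane : j ≠ a := Fin.ne_of_lt hja
    have hanej : a ≠ j := Fin.ne_of_gt hja
    -- apply the partial J at position a
    set X₂ := Jim a * N₁ with hX₂def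
    have hrel₂ : Rel M X₂ := hrel₁.trans (Rel.ofRed (Red_Jim a) N₁)
    set Q : Mat g → Prop := fun X => Inv j X ∧
      (∀ i : Fin g, j ≤ i → i ≠ a → X (inr i) (inl j) = 0) ∧
      (∀ i ∈ s', X (inl i) (inl j) = 0) ∧ X (inl a) (inl j) = 0 with hQdef
    have hQX₂ : Q X₂ := by
      refine ⟨?_, ?_, ?_, ?_⟩
      · intro k hk
        obtain ⟨h1, h2, h3⟩ := hInv₁ k hk
        refine ⟨fun i hi => ?_, fun i => ?_, ?_⟩
        · rw [hX₂def, Jim_mul_apply]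
          by_cases hia : i = a
          · subst hia; rw [if_pos rfl]; exact h2 i
          · rw [if_neg (by simp [hia]), if_neg (by simp)]; exact h1 i hi
        · rw [hX₂def, Jim_mul_apply]
          by_cases hia : i = a
          · subst hia
            rw [if_neg (by simp), if_pos rfl, h1 i (by rw [Fin.lt_def]; omega), neg_zero]
          · rw [if_neg (by simp), if_neg (by simp [hia])]; exact h2 i
        · have hka : k ≠ a := by intro he; rw [he] at hk; omega
          rw [hX₂def, Jim_mul_apply, if_neg (by simp [hka]), if_neg (by simp)]
          exact h3
      · intro i hij hia
        rw [hX₂def, Jim_mul_apply, if_neg (by simp), if_neg (by simp [hia])]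
        exact hC₁ i hij
      · intro i hi
        have hia : i ≠ a := fun he => ha (he ▸ hi)
        rw [hX₂def, Jim_mul_apply, if_neg (by simp [hia]), if_neg (by simp)]
        exact hz₁ i hi
      · rw [hX₂def, Jim_mul_apply, if_pos rfl]
        exact hC₁ a (le_of_lt hja)
    have m1 : ∀ (t : ℤ) (X : Mat g), Q X → ∃ P, Red P ∧ Q (P * X) ∧
        (P * X) (inl j) (inl j) = X (inl j) (inl j) + t * X (inr a) (inl j) ∧
        (P * X) (inr a) (inl j) = X (inr a) (inl j) := by
      intro t X hQ
      obtain ⟨hI, hc, hss, haa⟩ := hQ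
      refine ⟨Um (single j a t + single a j t), Red_U2 j a t,
        ⟨?_, ?_, ?_, ?_⟩, ?_, ?_⟩
      · intro k hk
        obtain ⟨h1, h2, h3⟩ := hI k hk
        refine ⟨fun i hi => ?_, fun i => ?_, ?_⟩
        · rw [U2_apply j a hjane]
          by_cases hij' : i = j
          · rw [hij']
            rw [if_pos rfl, h2 a, mul_zero, add_zero]
            exact h1 j (hij' ▸ hi)
          · by_cases hia : i = a
            · rw [hia]
              rw [if_neg (by simp [hanej]), if_pos rfl, h2 j, mul_zero, add_zero]
              exact h1 a (hia ▸ hi)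
            · rw [if_neg (by simp [hij']), if_neg (by simp [hia]), add_zero]; exact h1 i hi
        · rw [U2_apply j a hjane, if_neg (by simp), if_neg (by simp), add_zero]; exact h2 i
        · have hkj : k ≠ j := by intro he; rw [he] at hk; omega
          have hka : k ≠ a := by intro he; rw [he] at hk; omega
          rw [U2_apply j a hjane, if_neg (by simp [hkj]), if_neg (by simp [hka]), add_zero]
          exact h3
      · intro i hij hia
        rw [U2_apply j a hjane, if_neg (by simp), if_neg (by simp), add_zero]
        exact hc i hij hia
      · intro i hi
        have hij' : i ≠ j := fun he => absurd (he ▸ hs i (Finset.mem_insert_of_mem hi)) (lt_irrefl j)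
        have hia : i ≠ a := fun he => ha (he ▸ hi)
        rw [U2_apply j a hjane, if_neg (by simp [hij']), if_neg (by simp [hia]), add_zero]
        exact hss i hi
      · rw [U2_apply j a hjane, if_neg (by simp [hanej]), if_pos rfl, hc j le_rfl hjane,
          mul_zero, add_zero]
        exact haa
      · rw [U2_apply j a hjane, if_pos rfl]
      · rw [U2_apply j a hjane, if_neg (by simp), if_neg (by simp), add_zero]
    have m2 : ∀ (t : ℤ) (X : Mat g), Q X → ∃ P, Red P ∧ Q (P * X) ∧
        (P * X) (inr a) (inl j) = X (inr a) (inl j) + t * X (inl j) (inl j) ∧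
        (P * X) (inl j) (inl j) = X (inl j) (inl j) := by
      intro t X hQ
      obtain ⟨hI, hc, hss, haa⟩ := hQ
      refine ⟨Lm (single a j t + single j a t), Red_L2 a j t,
        ⟨?_, ?_, ?_, ?_⟩, ?_, ?_⟩
      · intro k hk
        obtain ⟨h1, h2, h3⟩ := hI k hk
        refine ⟨fun i hi => ?_, fun i => ?_, ?_⟩
        · rw [L2_apply a j hanej, if_neg (by simp), if_neg (by simp), add_zero]; exact h1 i hi
        · rw [L2_apply a j hanej]
          by_cases hia : i = a
          · rw [hia]
            rw [if_pos rfl, h1 j (by rw [Fin.lt_def]; omega), mul_zero, add_zero]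
            exact h2 a
          · by_cases hij' : i = j
            · rw [hij']
              rw [if_neg (by simp [hjane]), if_pos rfl,
                h1 a (by rw [Fin.lt_def]; omega), mul_zero, add_zero]
              exact h2 j
            · rw [if_neg (by simp [hia]), if_neg (by simp [hij']), add_zero]; exact h2 i
        · rw [L2_apply a j hanej, if_neg (by simp), if_neg (by simp), add_zero]; exact h3
      · intro i hij hia
        rw [L2_apply a j hanej]
        by_cases hij' : i = j
        · subst hij'
          rw [if_neg (by simp [hia]), if_pos rfl, haa, mul_zero, add_zero]
          exact hc i hij hia
        · rw [if_neg (by simp [hia]), if_neg (by simp [hij']), add_zero]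
          exact hc i hij hia
      · intro i hi
        rw [L2_apply a j hanej, if_neg (by simp), if_neg (by simp), add_zero]; exact hss i hi
      · rw [L2_apply a j hanej, if_neg (by simp), if_neg (by simp), add_zero]; exact haa
      · rw [L2_apply a j hanej, if_pos rfl]
      · rw [L2_apply a j hanej, if_neg (by simp), if_neg (by simp), add_zero]
    obtain ⟨N, hrelN, hQN, hzN⟩ := euclid Q (fun X => X (inl j) (inl j))
      (fun X => X (inr a) (inl j)) m1 m2 (X₂ (inr a) (inl j)).natAbs X₂ hQX₂ le_rfl
    refine ⟨N, hrel₂.trans hrelN, hQN.1, fun i hij => ?_, fun i hi => ?_⟩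
    · by_cases hia : i = a
      · subst hia; exact hzN
      · exact hQN.2.1 i hij hia
    · rcases Finset.mem_insert.mp hi with rfl | hi'
      · exact hQN.2.2.2
      · exact hQN.2.2.1 i hi'

end SpGen
namespace SpGen

open Matrix Sum

variable {g : ℕ}

/-- the entries of `C` above the diagonal in column `j` vanish automatically -/
lemma symzero (j : Fin g) (M : Mat g) (hSp : IsSpM M) (hInv : Inv j M)
    (hC : ∀ i : Fin g, j ≤ i → M (inr i) (inl j) = 0) :
    ∀ k : Fin g, M (inr k) (inl j) = 0 := by
  have main : ∀ n : ℕ, ∀ k : Fin g, (k : ℕ) = n → M (inr k) (inl j) = 0 := by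
    intro n
    induction n using Nat.strong_induction_on with
    | _ n IH =>
      intro k hkn
      by_cases hjk : j ≤ k
      · exact hC k hjk
      · have hkj : (k : ℕ) < (j : ℕ) := by
          rw [Fin.le_def] at hjk; omega
        obtain ⟨h1, h2, h3⟩ := hInv k hkj
        have hrel := isSpM_entry hSp (inl k) (inl j)
        rw [Jmat_entry_ll] at hrel
        have hrel2 : ∑ i, M (inl i) (inl k) * M (inr i) (inl j) = 0 := by
          rw [← hrel]
          exact Finset.sum_congr rfl fun i _ => by rw [h2 i, zero_mul, sub_zero]
        rw [Finset.sum_eq_single k] at hrel2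
        · rcases mul_eq_zero.mp hrel2 with h | h
          · exact absurd h h3
          · exact h
        · intro i _ hik
          rcases lt_or_gt_of_ne hik with hlt | hgt
          · rw [IH (i : ℕ) (by rw [← hkn]; exact hlt) i rfl, mul_zero]
          · rw [h1 i hgt, zero_mul]
        · intro h; exact absurd (Finset.mem_univ k) h
  exact fun k => main (k : ℕ) k rfl

/-- the diagonal entry of column `j` is nonzero, by invertibility -/
lemma diag_ne (j : Fin g) (M : Mat g) (hdet : IsUnit M.det) (hInv : Inv j M)
    (hColA : ∀ i : Fin g, j < i → M (inl i) (inl j) = 0)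
    (hColC : ∀ i : Fin g, M (inr i) (inl j) = 0) :
    M (inl j) (inl j) ≠ 0 := by
  intro h0
  -- the auxiliary matrix: columns ≤ j from A, columns > j from the identity
  set W : Matrix (Fin g) (Fin g) ℤ := Matrix.of fun i k =>
    if (k : ℕ) ≤ (j : ℕ) then M (inl i) (inl k) else if i = k then 1 else 0 with hW
  have hWentry : ∀ i k : Fin g, (k : ℕ) < (i : ℕ) → W i k = 0 := by
    intro i k hki
    show (if (k : ℕ) ≤ (j : ℕ) then M (inl i) (inl k) else if i = k then 1 else 0) = 0
    rcases le_or_gt (k : ℕ) (j : ℕ) with hkj | hkj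
    · rw [if_pos hkj]
      rcases lt_or_eq_of_le hkj with hkj' | hkj'
      · exact (hInv k hkj').1 i (by rw [Fin.lt_def]; omega)
      · have : k = j := Fin.ext hkj'
        subst this
        exact hColA i (by rw [Fin.lt_def]; omega)
    · rw [if_neg (by omega), if_neg (fun he => by rw [he] at hki; omega)]
  have hWtri : W.BlockTriangular id := fun i k hki => hWentry i k hki
  have hWdet : W.det = 0 := by
    rw [det_of_upperTriangular hWtri]
    refine Finset.prod_eq_zero (Finset.mem_univ j) ?_
    show (if (j : ℕ) ≤ (j : ℕ) then M (inl j) (inl j) else _) = 0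
    rw [if_pos le_rfl]
    exact h0
  obtain ⟨w, hw0, hwv⟩ := Matrix.exists_mulVec_eq_zero_iff.mpr hWdet
  -- w vanishes beyond column j
  have hwzero : ∀ k : Fin g, (j : ℕ) < (k : ℕ) → w k = 0 := by
    intro k hk
    have hrow := congrFun hwv k
    rw [Matrix.mulVec, dotProduct] at hrow
    rw [Finset.sum_eq_single k] at hrow
    · rw [show W k k = 1 from by
        show (if (k : ℕ) ≤ (j : ℕ) then _ else if k = k then 1 else 0) = 1
        rw [if_neg (by omega), if_pos rfl], one_mul] at hrow
      exact hrow
    · intro b _ hbk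
      show (if (b : ℕ) ≤ (j : ℕ) then M (inl k) (inl b) else if k = b then 1 else 0) * w b = 0
      rcases le_or_gt (b : ℕ) (j : ℕ) with hbj | hbj
      · rw [if_pos hbj]
        rcases lt_or_eq_of_le hbj with hbj' | hbj'
        · rw [(hInv b hbj').1 k (by rw [Fin.lt_def]; omega), zero_mul]
        · have : b = j := Fin.ext hbj'
          subst this
          rw [hColA k (by rw [Fin.lt_def]; omega), zero_mul]
      · rw [if_neg (by omega), if_neg (Ne.symm hbk), zero_mul]
    · intro h; exact absurd (Finset.mem_univ k) h
  -- build a kernel vector for M itself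
  have hMv : M *ᵥ (Sum.elim w (fun _ => (0 : ℤ))) = 0 := by
    funext u
    rw [Matrix.mulVec, dotProduct, Fintype.sum_sum_type]
    simp only [Sum.elim_inl, Sum.elim_inr, mul_zero, Finset.sum_const_zero, add_zero,
      Pi.zero_apply]
    cases u with
    | inl a =>
      have hrow := congrFun hwv a
      rw [Matrix.mulVec, dotProduct] at hrow
      simp only [Pi.zero_apply] at hrow
      rw [← hrow]
      refine Finset.sum_congr rfl fun k _ => ?_
      show M (inl a) (inl k) * w k =
        (if (k : ℕ) ≤ (j : ℕ) then M (inl a) (inl k) else if a = k then 1 else 0) * w k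
      rcases le_or_gt (k : ℕ) (j : ℕ) with hkj | hkj
      · rw [if_pos hkj]
      · rw [hwzero k hkj, mul_zero, mul_zero]
    | inr a =>
      refine Finset.sum_eq_zero fun k _ => ?_
      rcases le_or_gt (k : ℕ) (j : ℕ) with hkj | hkj
      · rcases lt_or_eq_of_le hkj with hkj' | hkj'
        · rw [(hInv k hkj').2.1 a, zero_mul]
        · have : k = j := Fin.ext hkj'
          subst this
          rw [hColC a, zero_mul]
      · rw [hwzero k hkj, mul_zero]
  have hvne : (Sum.elim w (fun _ => (0 : ℤ)) : (Fin g ⊕ Fin g) → ℤ) ≠ 0 := by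
    intro hveq
    apply hw0
    funext k
    exact congrFun hveq (inl k)
  have : M.det = 0 := Matrix.exists_mulVec_eq_zero_iff.mp ⟨_, hvne, hMv⟩
  rw [this] at hdet
  exact absurd hdet (by simp)

lemma stage (j : Fin g) (M : Mat g) (hSp : IsSpM M) (hInv : Inv (j : ℕ) M) :
    ∃ N, Rel M N ∧ Inv ((j : ℕ) + 1) N := by
  obtain ⟨N₁, hrel₁, hInv₁, hz₁⟩ :=
    alpha j (Finset.univ.filter fun i => j ≤ i) (fun i hi => (Finset.mem_filter.mp hi).2)
      M hInv
  have hC₁ : ∀ i, j ≤ i → N₁ (inr i) (inl j) = 0 := fun i hi =>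
    hz₁ i (Finset.mem_filter.mpr ⟨Finset.mem_univ i, hi⟩)
  obtain ⟨N₂, hrel₂, hInv₂, hC₂, hA₂'⟩ :=
    beta j (Finset.univ.filter fun i => j < i) (fun i hi => (Finset.mem_filter.mp hi).2)
      N₁ hInv₁ hC₁
  have hA₂ : ∀ i, j < i → N₂ (inl i) (inl j) = 0 := fun i hi =>
    hA₂' i (Finset.mem_filter.mpr ⟨Finset.mem_univ i, hi⟩)
  have hSp₂ : IsSpM N₂ := (hrel₁.trans hrel₂).isSpM hSp
  have hCall : ∀ k, N₂ (inr k) (inl j) = 0 := symzero j N₂ hSp₂ hInv₂ hC₂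
  have hdiag : N₂ (inl j) (inl j) ≠ 0 := diag_ne j N₂ (isSpM_det hSp₂) hInv₂ hA₂ hCall
  refine ⟨N₂, hrel₁.trans hrel₂, ?_⟩
  intro k hk
  by_cases hkj : (k : ℕ) < (j : ℕ)
  · exact hInv₂ k hkj
  · have hkj' : k = j := Fin.ext (by omega)
    subst hkj'
    exact ⟨fun i hi => hA₂ i hi, hCall, hdiag⟩

lemma stages : ∀ (d m : ℕ), m + d = g → ∀ M : Mat g, IsSpM M → Inv m M →
    ∃ N, Rel M N ∧ Inv g N := by
  intro d
  induction d with
  | zero =>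
    intro m hm M _ hI
    exact ⟨M, Rel.refl M, by rwa [← Nat.add_zero m, hm] at hI⟩
  | succ d IH =>
    intro m hm M hSp hI
    have hmg : m < g := by omega
    obtain ⟨N₁, hrel₁, hInv₁⟩ := stage ⟨m, hmg⟩ M hSp hI
    obtain ⟨N, hrel, hInv⟩ := IH (m + 1) (by omega) N₁ (hrel₁.isSpM hSp) hInv₁
    exact ⟨N, hrel₁.trans hrel, hInv⟩

end SpGen
namespace SpGen

open Matrix Sum

variable {g : ℕ}

lemma diag_unit (M : Mat g) (hSp : IsSpM M)
    (hUT : ∀ k i : Fin g, k < i → M (inl i) (inl k) = 0)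
    (hCZ : ∀ k i : Fin g, M (inr i) (inl k) = 0) :
    ∀ k : Fin g, IsUnit (M (inl k) (inl k)) := by
  set A : Matrix (Fin g) (Fin g) ℤ := Matrix.of fun i k => M (inl i) (inl k) with hA
  set D : Matrix (Fin g) (Fin g) ℤ := Matrix.of fun i k => M (inr i) (inr k) with hD
  have hAD : Aᵀ * D = 1 := by
    ext k l
    rw [Matrix.mul_apply, Matrix.one_apply]
    have hrel := isSpM_entry hSp (inl k) (inr l)
    rw [Jmat_entry_lr] at hrel
    rw [show ∑ i, Aᵀ k i * D i l = ∑ i, M (inl i) (inl k) * M (inr i) (inr l) from rfl,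
      ← hrel]
    refine Finset.sum_congr rfl fun i _ => ?_
    rw [hCZ k i, zero_mul, sub_zero]
  have hdetA : IsUnit A.det := by
    have h1 : A.det * D.det = 1 := by
      have := congrArg Matrix.det hAD
      rwa [det_mul, det_transpose, det_one] at this
    exact IsUnit.of_mul_eq_one _ h1
  have hAtri : A.BlockTriangular id := fun i k hki => hUT k i hki
  rw [det_of_upperTriangular hAtri] at hdetA
  intro k
  have hdvd : A k k ∣ ∏ i, A i i :=
    Finset.dvd_prod_of_mem (fun i => A i i) (Finset.mem_univ k)
  exact isUnit_of_dvd_unit hdvd hdetA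

lemma Jim2_apply (i : Fin g) (X : Mat g) (u v : Fin g ⊕ Fin g) :
    (Jim i * (Jim i * X)) u v = if u = inl i then -(X (inl i) v) else
      if u = inr i then -(X (inr i) v) else X u v := by
  rw [Jim_mul_apply]
  by_cases h1 : u = inl i
  · rw [if_pos h1, if_pos h1, Jim_mul_apply, if_neg (by simp), if_pos rfl]
  · rw [if_neg h1, if_neg h1]
    by_cases h2 : u = inr i
    · rw [if_pos h2, if_pos h2, Jim_mul_apply, if_pos rfl]
    · rw [if_neg h2, if_neg h2, Jim_mul_apply, if_neg h1, if_neg h2]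

/-- endgame invariant: first `m` columns of `(A;C)` are exactly `(e_k; 0)`, `A` upper
triangular with unit diagonal, `C = 0`. -/
def EInv (m : ℕ) (X : Mat g) : Prop :=
  (∀ k : Fin g, (k : ℕ) < m → ∀ i, X (inl i) (inl k) = if i = k then 1 else 0) ∧
  (∀ k i : Fin g, k < i → X (inl i) (inl k) = 0) ∧
  (∀ k i : Fin g, X (inr i) (inl k) = 0) ∧
  (∀ k : Fin g, IsUnit (X (inl k) (inl k)))

lemma colfix (j : Fin g) (M : Mat g) (hE : EInv (j : ℕ) M) :
    ∃ N, Rel M N ∧ EInv ((j : ℕ) + 1) N := by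
  obtain ⟨hc1, hc2, hc3, hc4⟩ := hE
  -- step (a): make the diagonal entry 1
  have hsign : ∃ M₁, Rel M M₁ ∧ EInv (j : ℕ) M₁ ∧ M₁ (inl j) (inl j) = 1 ∧
      (∀ u v, M₁ u v = M u v ∨ M₁ u v = -(M u v)) := by
    rcases Int.isUnit_iff.mp (hc4 j) with h1 | h1
    · exact ⟨M, Rel.refl M, ⟨hc1, hc2, hc3, hc4⟩, h1, fun u v => Or.inl rfl⟩
    · refine ⟨Jim j * (Jim j * M), (Rel.ofRed (Red_Jim j) M).trans
        (Rel.ofRed (Red_Jim j) _), ⟨?_, ?_, ?_, ?_⟩, ?_, ?_⟩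
      · intro k hk i
        rw [Jim2_apply]
        by_cases hij : i = j
        · subst hij
          rw [if_pos rfl]
          have hkj : i ≠ k := fun he => by rw [← he] at hk; omega
          rw [hc1 k hk i, if_neg hkj, neg_zero]
        · rw [if_neg (by simp [hij]), if_neg (by simp)]
          exact hc1 k hk i
      · intro k i hki
        rw [Jim2_apply]
        by_cases hij : i = j
        · subst hij
          rw [if_pos rfl, hc2 k i hki, neg_zero]
        · rw [if_neg (by simp [hij]), if_neg (by simp)]
          exact hc2 k i hki
      · intro k i
        rw [Jim2_apply]
        by_cases hij : i = j
        · subst hij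
          rw [if_neg (by simp), if_pos rfl, hc3 k i, neg_zero]
        · rw [if_neg (by simp), if_neg (by simp [hij])]
          exact hc3 k i
      · intro k
        rw [Jim2_apply]
        by_cases hkj : k = j
        · subst hkj
          rw [if_pos rfl, h1]
          norm_num
        · rw [if_neg (by simp [hkj]), if_neg (by simp)]
          exact hc4 k
      · rw [Jim2_apply, if_pos rfl, h1]
        norm_num
      · intro u v
        rw [Jim2_apply]
        by_cases h2 : u = inl j
        · rw [if_pos h2, h2]; exact Or.inr rfl
        · rw [if_neg h2]
          by_cases h3 : u = inr j
          · rw [if_pos h3, h3]; exact Or.inr rfl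
          · rw [if_neg h3]; exact Or.inl rfl
  obtain ⟨M₁, hrel₁, ⟨hd1, hd2, hd3, hd4⟩, hdiag1, _⟩ := hsign
  -- step (b): the excursion clearing the above-diagonal entries of column j
  set X₁ := Jim j * M₁ with hX₁def
  set QE : Finset (Fin g) → Mat g → Prop := fun s X =>
    (∀ k : Fin g, (k : ℕ) < (j : ℕ) → ∀ i, i ≠ j →
        X (inl i) (inl k) = if i = k then 1 else 0) ∧
    (∀ k i : Fin g, k < i → i ≠ j → X (inl i) (inl k) = 0) ∧
    (∀ k : Fin g, X (inl j) (inl k) = 0) ∧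
    (∀ k i : Fin g, i ≠ j → X (inr i) (inl k) = 0) ∧
    (X (inr j) (inl j) = -1) ∧
    (∀ k : Fin g, (k : ℕ) < (j : ℕ) → X (inr j) (inl k) = 0) ∧
    (∀ k : Fin g, k ≠ j → IsUnit (X (inl k) (inl k))) ∧
    (∀ i ∈ s, X (inl i) (inl j) = 0) with hQEdef
  have hQE₁ : QE ∅ X₁ := by
    refine ⟨?_, ?_, ?_, ?_, ?_, ?_, ?_, by simp⟩
    · intro k hk i hij
      rw [hX₁def, Jim_mul_apply, if_neg (by simp [hij]), if_neg (by simp)]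
      exact hd1 k hk i
    · intro k i hki hij
      rw [hX₁def, Jim_mul_apply, if_neg (by simp [hij]), if_neg (by simp)]
      exact hd2 k i hki
    · intro k
      rw [hX₁def, Jim_mul_apply, if_pos rfl]
      exact hd3 k j
    · intro k i hij
      rw [hX₁def, Jim_mul_apply, if_neg (by simp), if_neg (by simp [hij])]
      exact hd3 k i
    · rw [hX₁def, Jim_mul_apply, if_neg (by simp), if_pos rfl, hdiag1]
    · intro k hk
      rw [hX₁def, Jim_mul_apply, if_neg (by simp), if_pos rfl,
        hd1 k hk j, if_neg (fun he => by rw [he] at hk; omega), neg_zero]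
    · intro k hkj
      rw [hX₁def, Jim_mul_apply, if_neg (by simp [hkj]), if_neg (by simp)]
      exact hd4 k
  have hfold : ∀ s : Finset (Fin g), (∀ i ∈ s, i < j) → ∀ X, QE ∅ X →
      ∃ Y, Rel X Y ∧ QE s Y := by
    intro s
    induction s using Finset.induction_on with
    | empty => intro _ X hX; exact ⟨X, Rel.refl X, hX⟩
    | @insert a s' ha IH =>
      intro hs X hX
      obtain ⟨Y₁, hrelY₁, hQ₁⟩ := IH (fun i hi => hs i (Finset.mem_insert_of_mem hi)) X hX
      have haj : a < j := hs a (Finset.mem_insert_self a s')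
      have hajne : a ≠ j := Fin.ne_of_lt haj
      have hjane : j ≠ a := Fin.ne_of_gt haj
      obtain ⟨q1, q2, q3, q4, q5, q6, q7, q8⟩ := hQ₁
      set t := Y₁ (inl a) (inl j) with ht
      set P := Um (single a j t + single j a t) with hP
      have happly : ∀ u v, (P * Y₁) u v = Y₁ u v + (if u = inl a then t * Y₁ (inr j) v
          else if u = inl j then t * Y₁ (inr a) v else 0) := by
        intro u v; rw [hP, U2_apply a j hajne]
      refine ⟨P * Y₁, hrelY₁.trans (Rel.ofRed (Red_Um _ (by
        rw [transpose_add, sb_transpose, sb_transpose, add_comm])) Y₁),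
        ?_, ?_, ?_, ?_, ?_, ?_, ?_, ?_⟩
      · intro k hk i hij
        rw [happly]
        by_cases hia : i = a
        · rw [hia, if_pos rfl, q6 k hk, mul_zero, add_zero]
          exact q1 k hk a hajne
        · rw [if_neg (by simp [hia]), if_neg (by simp [hij]), add_zero]
          exact q1 k hk i hij
      · intro k i hki hij
        rw [happly]
        by_cases hia : i = a
        · rw [hia, if_pos rfl, q6 k (by
            have h5 : (k : ℕ) < (a : ℕ) := by
              have := hki; rw [hia] at this; exact Fin.lt_def.mp this
            have h6 := Fin.lt_def.mp haj
            omega), mul_zero, add_zero]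
          exact q2 k a (hia ▸ hki) hajne
        · rw [if_neg (by simp [hia]), if_neg (by simp [hij]), add_zero]
          exact q2 k i hki hij
      · intro k
        rw [happly, if_neg (by simp [hjane]), if_pos rfl, q4 k a hajne, mul_zero, add_zero]
        exact q3 k
      · intro k i hij
        rw [happly, if_neg (by simp), if_neg (by simp), add_zero]
        exact q4 k i hij
      · rw [happly, if_neg (by simp), if_neg (by simp), add_zero]
        exact q5
      · intro k hk
        rw [happly, if_neg (by simp), if_neg (by simp), add_zero]
        exact q6 k hk
      · intro k hkj
        rw [happly]
        by_cases hka : k = a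
        · rw [hka, if_pos rfl, q6 a (Fin.lt_def.mp haj), mul_zero, add_zero]
          exact q7 a hajne
        · rw [if_neg (by simp [hka]), if_neg (by simp [hkj]), add_zero]
          exact q7 k hkj
      · intro i hi
        rcases Finset.mem_insert.mp hi with rfl | hi'
        · rw [happly, if_pos rfl, q5, ← ht]
          ring
        · have hia : i ≠ a := fun he => ha (he ▸ hi')
          rw [happly, if_neg (by simp [hia]),
            if_neg (by simp [Fin.ne_of_lt (hs i hi)]), add_zero]
          exact q8 i hi'
  obtain ⟨Y, hrelY, hQY⟩ := hfold (Finset.univ.filter fun i => i < j)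
    (fun i hi => (Finset.mem_filter.mp hi).2) X₁ hQE₁
  obtain ⟨q1, q2, q3, q4, q5, q6, q7, q8⟩ := hQY
  set N := Jiinvm j * Y with hNdef
  have hNapply : ∀ u v, N u v = if u = inl j then -(Y (inr j) v) else
      if u = inr j then Y (inl j) v else Y u v := fun u v => by
    rw [hNdef, Jiinvm_mul_apply]
  refine ⟨N, (hrel₁.trans ((Rel.ofRed (Red_Jim j) M₁).trans hrelY)).trans
    (Rel.ofRed (Red_Jiinvm j) Y), ?_, ?_, ?_, ?_⟩
  · intro k hk i
    by_cases hij : i = j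
    · rw [hij, hNapply, if_pos rfl]
      by_cases hkj : (k : ℕ) < (j : ℕ)
      · rw [q6 k hkj, neg_zero, if_neg (fun he => by rw [he] at hkj; omega)]
      · have hkj' : k = j := Fin.ext (by omega)
        rw [hkj', q5, if_pos rfl]
        ring
    · rw [hNapply, if_neg (by simp [hij]), if_neg (by simp)]
      by_cases hkj : (k : ℕ) < (j : ℕ)
      · exact q1 k hkj i hij
      · have hkj' : k = j := Fin.ext (by omega)
        rw [hkj']
        have hij' : i ≠ j := hij
        rcases lt_trichotomy i j with hik | hik | hik
        · rw [q8 i (Finset.mem_filter.mpr ⟨Finset.mem_univ i, hik⟩),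
            if_neg (Fin.ne_of_lt hik)]
        · exact absurd hik hij'
        · rw [q2 j i hik hij, if_neg (Fin.ne_of_gt hik)]
  · intro k i hki
    by_cases hij : i = j
    · rw [hij, hNapply, if_pos rfl, q6 k (Fin.lt_def.mp (hij ▸ hki)), neg_zero]
    · rw [hNapply, if_neg (by simp [hij]), if_neg (by simp)]
      exact q2 k i hki hij
  · intro k i
    by_cases hij : i = j
    · rw [hij, hNapply, if_neg (by simp), if_pos rfl]
      exact q3 k
    · rw [hNapply, if_neg (by simp), if_neg (by simp [hij])]
      exact q4 k i hij
  · intro k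
    by_cases hkj : k = j
    · rw [hkj, hNapply, if_pos rfl, q5]
      norm_num
    · rw [hNapply, if_neg (by simp [hkj]), if_neg (by simp)]
      exact q7 k hkj

lemma colfixes : ∀ (d m : ℕ), m + d = g → ∀ M : Mat g, EInv m M →
    ∃ N, Rel M N ∧ EInv g N := by
  intro d
  induction d with
  | zero =>
    intro m hm M hI
    exact ⟨M, Rel.refl M, by rwa [← Nat.add_zero m, hm] at hI⟩
  | succ d IH =>
    intro m hm M hI
    have hmg : m < g := by omega
    obtain ⟨N₁, hrel₁, hInv₁⟩ := colfix ⟨m, hmg⟩ M hI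
    obtain ⟨N, hrel, hInv⟩ := IH (m + 1) (by omega) N₁ hInv₁
    exact ⟨N, hrel₁.trans hrel, hInv⟩

lemma endgame (M : Mat g) (hSp : IsSpM M) (hInv : Inv g M) : Red M := by
  have hUT : ∀ k i : Fin g, k < i → M (inl i) (inl k) = 0 :=
    fun k i hki => (hInv k k.isLt).1 i hki
  have hCZ : ∀ k i : Fin g, M (inr i) (inl k) = 0 :=
    fun k i => (hInv k k.isLt).2.1 i
  have hE0 : EInv 0 M :=
    ⟨fun k hk => absurd hk (Nat.not_lt_zero _), hUT, hCZ, diag_unit M hSp hUT hCZ⟩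
  obtain ⟨N, hrel, hEg⟩ := colfixes g 0 (zero_add g) M hE0
  obtain ⟨e1, _, e3, _⟩ := hEg
  have hA : ∀ k i : Fin g, N (inl i) (inl k) = if i = k then 1 else 0 :=
    fun k i => e1 k k.isLt i
  have hSpN : IsSpM N := hrel.isSpM hSp
  -- D = 1
  have hD : ∀ k l : Fin g, N (inr k) (inr l) = if k = l then 1 else 0 := by
    intro k l
    have hrel2 := isSpM_entry hSpN (inl k) (inr l)
    rw [Jmat_entry_lr] at hrel2
    simp only [e3, zero_mul, sub_zero, hA, ite_mul, one_mul,
      Finset.sum_ite_eq', Finset.mem_univ, if_pos] at hrel2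
    exact hrel2
  -- B is symmetric
  set B : Matrix (Fin g) (Fin g) ℤ := Matrix.of fun i l => N (inl i) (inr l) with hB
  have hBsym : Bᵀ = B := by
    ext k l
    have hrel2 := isSpM_entry hSpN (inr k) (inr l)
    rw [Jmat_entry_rr] at hrel2
    simp only [hD, mul_ite, mul_one, mul_zero, ite_mul, one_mul, zero_mul,
      Finset.sum_sub_distrib, Finset.sum_ite_eq', Finset.mem_univ, if_pos] at hrel2
    show N (inl l) (inr k) = N (inl k) (inr l)
    omega
  have hNeq : N = Um B := by
    ext u v
    cases u with
    | inl i =>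
      cases v with
      | inl k =>
        rw [hA k i]
        show _ = (1 : Matrix (Fin g) (Fin g) ℤ) i k
        rw [Matrix.one_apply]
      | inr l => rfl
    | inr i =>
      cases v with
      | inl k =>
        rw [e3 k i]
        show (0 : ℤ) = (0 : Matrix (Fin g) (Fin g) ℤ) i k
        rw [Matrix.zero_apply]
      | inr l =>
        rw [hD i l]
        show _ = (1 : Matrix (Fin g) (Fin g) ℤ) i l
        rw [Matrix.one_apply]
  exact hrel.red (hNeq ▸ Red_Um B hBsym)

end SpGen
namespace SpGen

open Matrix Sum

variable {g : ℕ}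

lemma all_red (γ : Sp g) : γ ∈ Gp g := by
  have hR : Red (mval γ) := by
    obtain ⟨N, hrel, hInv⟩ := stages g 0 (zero_add g) (mval γ) (isSpM_mval γ) (Inv_zero _)
    exact hrel.red (endgame N (hrel.isSpM (isSpM_mval γ)) hInv)
  obtain ⟨δ, hδ, hval⟩ := hR
  have hii : δ = γ := Subtype.ext (Units.ext hval)
  exact hii ▸ hδ

end SpGen
/-- `Sp_{2g}(ℤ)` is generated by `J` together with the `g(g+1)/2` matrices `M_{i,j}`,
`1 ≤ i ≤ j ≤ g`. -/
theorem sp_generated_by_J_and_translations (g : ℕ) (hg : 1 ≤ g) :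
    Subgroup.closure
      ({γ : Sp g | ((γ : Matrix.GeneralLinearGroup (Fin g ⊕ Fin g) ℤ) :
          Matrix (Fin g ⊕ Fin g) (Fin g ⊕ Fin g) ℤ) = Jmat g} ∪
       {γ : Sp g | ∃ i j : Fin g, i ≤ j ∧
          ((γ : Matrix.GeneralLinearGroup (Fin g ⊕ Fin g) ℤ) :
          Matrix (Fin g ⊕ Fin g) (Fin g ⊕ Fin g) ℤ) = Mmat g i j}) = ⊤ := by
  rw [eq_top_iff]
  intro γ _
  exact SpGen.all_red γ
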